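/- arXiv:2207.05516 — 4 statements merged into one kernel-verified Lean document; each statement's English description precedes it below -/
import Mathlib

section
/- In the extended model, for every fixed l ≥ 0, the mean of (α^{[l]}_k) over one period is sandwiched as follows: (B' + N' − n)/2 + K + l·N' − a·b/2 ≤ (1/(aBN))·Σ_{k=1}^{aBN} α^{[l]}_k ≤ (B' + N' − n)/2 + K + l·N' + a·b/2. -/
/-- The `l`-failure Age-of-Information sequence of the extended model. -/
def aoiExt (A' B' N' ΔB ΔN : ℤ) (l k : ℕ) : ℤ :=
  2 + (l : ℤ) * N' + ((k : ℤ) * A' - ΔN - 1) % N' +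
    (((k : ℤ) * A' - ΔB - 2 - (l : ℤ) * N') % B' -
      ((k : ℤ) * A' - ΔN - 1) % N') % B'

/-- The constant `K = 2 + (Δ_N + 1) %̄ n` where `x %̄ m = ⌈x/m⌉·m − x`. -/
def extK (ΔN n : ℕ) : ℤ :=
  2 + (⌈(((ΔN : ℚ) + 1)) / (n : ℚ)⌉ * n - ((ΔN : ℤ) + 1))

lemma emod_decomp (m M w : ℤ) (hm : 0 < m) (hM : 0 < M) :
    w % (m * M) = w % m + m * ((w / m) % M) := by
  have h1 : m * (w / m) + w % m = w := Int.mul_ediv_add_emod w m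
  set r := w % m with hr
  set t := w / m with ht
  have hr0 : 0 ≤ r := Int.emod_nonneg w hm.ne'
  have hr1 : r < m := Int.emod_lt_of_pos w hm
  have h2 : M * (t / M) + t % M = t := Int.mul_ediv_add_emod t M
  have hq0 : 0 ≤ t % M := Int.emod_nonneg t hM.ne'
  have hq1 : t % M < M := Int.emod_lt_of_pos t hM
  have hw : w = (r + m * (t % M)) + (m * M) * (t / M) := by
    have : m * (M * (t / M) + t % M) + r = w := by rw [h2]; exact h1
    linarith [this, mul_add m (M * (t / M)) (t % M)]
  rw [hw]
  rw [Int.add_mul_emod_self_left]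
  have hlt : r + m * (t % M) < m * M := by nlinarith
  have hge : 0 ≤ r + m * (t % M) := by positivity
  rw [Int.emod_eq_of_lt hge hlt]

lemma sum_emod_range (B : ℕ) (hB : 0 < B) (μ s : ℤ) (hs : IsCoprime s (B : ℤ)) :
    ∑ j ∈ Finset.range B, (μ + (j : ℤ) * s) % (B : ℤ) = ∑ j ∈ Finset.range B, (j : ℤ) := by
  have hBz : (0 : ℤ) < (B : ℤ) := by exact_mod_cast hB
  set f : ℕ → ℕ := fun j => ((μ + (j : ℤ) * s) % (B : ℤ)).toNat with hf
  have hfval : ∀ j : ℕ, ((f j : ℤ)) = (μ + (j : ℤ) * s) % (B : ℤ) := by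
    intro j
    exact Int.toNat_of_nonneg (Int.emod_nonneg _ hBz.ne')
  have hflt : ∀ j : ℕ, f j < B := by
    intro j
    have h := Int.emod_lt_of_pos (μ + (j : ℤ) * s) hBz
    have := hfval j
    omega
  have hinj : Set.InjOn f (Finset.range B) := by
    intro j hj j' hj' hjj
    simp only [Finset.coe_range, Set.mem_Iio] at hj hj'
    have heq : (μ + (j : ℤ) * s) % (B : ℤ) = (μ + (j' : ℤ) * s) % (B : ℤ) := by
      rw [← hfval j, ← hfval j', hjj]
    have h2 : (B : ℤ) ∣ (μ + (j : ℤ) * s) - (μ + (j' : ℤ) * s) :=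
      Int.ModEq.dvd heq.symm
    have hdvd : (B : ℤ) ∣ ((j : ℤ) - (j' : ℤ)) * s := by
      have h3 : (μ + (j : ℤ) * s) - (μ + (j' : ℤ) * s) = ((j : ℤ) - (j' : ℤ)) * s := by ring
      rwa [h3] at h2
    have hdvd2 : (B : ℤ) ∣ ((j : ℤ) - (j' : ℤ)) :=
      IsCoprime.dvd_of_dvd_mul_right hs.symm hdvd
    have habs : ((j : ℤ) - (j' : ℤ)) = 0 := by
      by_contra hne
      have hpos : (0:ℤ) < |(j : ℤ) - (j' : ℤ)| := abs_pos.mpr hne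
      have hle := Int.le_of_dvd hpos ((dvd_abs _ _).mpr hdvd2)
      have hlt : |(j : ℤ) - (j' : ℤ)| < (B : ℤ) := by
        rw [abs_lt]; constructor <;> omega
      linarith
    omega
  have hmaps : ∀ j ∈ Finset.range B, f j ∈ Finset.range B := by
    intro j _; exact Finset.mem_range.mpr (hflt j)
  have himg : Finset.image f (Finset.range B) = Finset.range B := by
    apply Finset.eq_of_subset_of_card_le
    · intro t ht
      obtain ⟨j, hj, rfl⟩ := Finset.mem_image.mp ht
      exact hmaps j hj
    · rw [Finset.card_image_of_injOn hinj]
  calc ∑ j ∈ Finset.range B, (μ + (j : ℤ) * s) % (B : ℤ)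
      = ∑ j ∈ Finset.range B, ((f j : ℤ)) := by
        refine Finset.sum_congr rfl fun j _ => (hfval j).symm
    _ = ∑ t ∈ Finset.image f (Finset.range B), (t : ℤ) :=
        (Finset.sum_image (fun x hx y hy h => hinj hx hy h)).symm
    _ = ∑ j ∈ Finset.range B, (j : ℤ) := by rw [himg]

lemma class_sum (B : ℕ) (hB : 0 < B) (m s y : ℤ) (hm : 0 < m) (hs : IsCoprime s (B : ℤ)) :
    ∑ j ∈ Finset.range B, (y + (j : ℤ) * (m * s)) % (m * (B : ℤ))
      = (B : ℤ) * (y % m) + m * ∑ j ∈ Finset.range B, (j : ℤ) := by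
  have hBz : (0 : ℤ) < (B : ℤ) := by exact_mod_cast hB
  have hterm : ∀ j : ℕ, (y + (j : ℤ) * (m * s)) % (m * (B : ℤ))
      = y % m + m * ((y / m + (j : ℤ) * s) % (B : ℤ)) := by
    intro j
    rw [emod_decomp m (B : ℤ) _ hm hBz]
    congr 1
    · have : y + (j : ℤ) * (m * s) = y + ((j : ℤ) * s) * m := by ring
      rw [this, Int.add_mul_emod_self_right]
    · congr 2
      have : y + (j : ℤ) * (m * s) = y + ((j : ℤ) * s) * m := by ring
      rw [this, Int.add_mul_ediv_right _ _ hm.ne']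
  calc ∑ j ∈ Finset.range B, (y + (j : ℤ) * (m * s)) % (m * (B : ℤ))
      = ∑ j ∈ Finset.range B, (y % m + m * ((y / m + (j : ℤ) * s) % (B : ℤ))) := by
        exact Finset.sum_congr rfl fun j _ => hterm j
    _ = (B : ℤ) * (y % m) + m * ∑ j ∈ Finset.range B, ((y / m + (j : ℤ) * s) % (B : ℤ)) := by
        rw [Finset.sum_add_distrib, Finset.sum_const, Finset.card_range, ← Finset.mul_sum]
        ring
    _ = (B : ℤ) * (y % m) + m * ∑ j ∈ Finset.range B, (j : ℤ) := by
        rw [sum_emod_range B hB _ s hs]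

lemma sum_Icc_one_mul (M B : ℕ) (hM : 0 < M) (f : ℕ → ℤ) :
    ∑ k ∈ Finset.Icc 1 (M * B), f k
      = ∑ i ∈ Finset.range M, ∑ j ∈ Finset.range B, f (1 + i + M * j) := by
  have h0 : Finset.Icc 1 (M * B) = Finset.Ico 1 (M * B + 1) := by
    rw [Finset.Ico_add_one_right_eq_Icc]
  rw [h0, Finset.sum_Ico_eq_sum_range]
  have h1 : M * B + 1 - 1 = M * B := by omega
  rw [h1]
  rw [← Finset.sum_product']
  refine (Finset.sum_nbij' (fun p => p.1 + M * p.2) (fun k => (k % M, k / M)) ?_ ?_ ?_ ?_ ?_).symm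
  · rintro ⟨i, j⟩ hp
    simp only [Finset.mem_product, Finset.mem_range] at hp
    simp only [Finset.mem_range]
    have h1 := hp.1; have h2 := hp.2
    calc i + M * j < M + M * j := by omega
      _ = M * (j + 1) := by ring
      _ ≤ M * B := Nat.mul_le_mul_left M (by omega)
  · intro k hk
    simp only [Finset.mem_range] at hk
    simp only [Finset.mem_product, Finset.mem_range]
    exact ⟨Nat.mod_lt _ hM, Nat.div_lt_of_lt_mul (by omega)⟩
  · rintro ⟨i, j⟩ hp
    simp only [Finset.mem_product, Finset.mem_range] at hp
    have h2 : (i + M * j) % M = i := by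
      rw [Nat.add_mul_mod_self_left, Nat.mod_eq_of_lt hp.1]
    have h3 : (i + M * j) / M = j := by
      rw [Nat.add_mul_div_left _ _ hM, Nat.div_eq_of_lt hp.1, Nat.zero_add]
    simp [h2, h3]
  · intro k hk
    simp [Nat.mod_add_div]
  · rintro ⟨i, j⟩ hp
    rw [Nat.add_assoc]

lemma extK_eq (ΔN n : ℕ) (hn : 0 < n) :
    extK ΔN n = 2 + (-((ΔN : ℤ) + 1)) % (n : ℤ) := by
  unfold extK
  have h1 : ⌈(((ΔN : ℚ) + 1)) / (n : ℚ)⌉ = -⌊(-((ΔN : ℚ) + 1)) / (n : ℚ)⌋ := by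
    rw [← neg_neg ((((ΔN : ℚ) + 1)) / (n : ℚ)), Int.ceil_neg, ← neg_div]
  have h2 : (-((ΔN : ℚ) + 1)) = (((-((ΔN : ℤ) + 1)) : ℤ) : ℚ) := by push_cast; ring
  rw [h1, h2, Rat.floor_intCast_div_natCast]
  have h3 : (-((ΔN : ℤ) + 1)) % (n : ℤ)
      = -((ΔN : ℤ) + 1) - (n : ℤ) * ((-((ΔN : ℤ) + 1)) / (n : ℤ)) := Int.emod_def _ _
  rw [h3]; ring

lemma core_sum (A B N a b n : ℕ) (hB : 0 < B)
    (hapos : 0 < a) (hbpos : 0 < b) (hnpos : 0 < n) (hNa : 0 < N * a)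
    (copZ : IsCoprime ((A : ℤ) * N * n) (B : ℤ))
    (copX : IsCoprime ((A : ℤ) * b) ((N * a : ℕ) : ℤ)) (c e : ℤ) :
    ∃ T : ℤ, 0 ≤ T ∧ T ≤ ((N : ℤ) * a) * ((a : ℤ) * b - 1) ∧
      ∑ k ∈ Finset.Icc 1 (N * a * B),
          (((k : ℤ) * ((A : ℤ) * b * n) - c) % ((N : ℤ) * a * n)
            + ((((k : ℤ) * ((A : ℤ) * b * n) - e) % ((B : ℤ) * a * b))
                - (((k : ℤ) * ((A : ℤ) * b * n) - c) % ((N : ℤ) * a * n))) % ((B : ℤ) * a * b))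
        = ((N : ℤ) * a * (B : ℤ)) * ((-c) % (n : ℤ))
            + (B : ℤ) * ((n : ℤ) * ∑ i ∈ Finset.range (N * a), (i : ℤ))
            + (B : ℤ) * T
            + ((N : ℤ) * a) * ((a : ℤ) * b) * (∑ j ∈ Finset.range B, (j : ℤ)) := by
  set M : ℕ := N * a with hMdef
  have hM : 0 < M := hNa
  have habz : (0 : ℤ) < (a : ℤ) * b := by positivity
  set Ap : ℤ := (A : ℤ) * b * n with hAp
  set Bp : ℤ := (B : ℤ) * a * b with hBp
  set Np : ℤ := (N : ℤ) * a * n with hNp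
  set X : ℕ → ℤ := fun k => ((k : ℤ) * Ap - c) % Np with hX
  set w : ℕ → ℤ := fun k0 => ((k0 : ℤ) * Ap - e) - X k0 with hw
  set F : ℕ → ℤ := fun k => X k + ((((k : ℤ) * Ap - e) % Bp) - X k) % Bp with hF
  refine ⟨∑ i ∈ Finset.range M, (w (1 + i)) % ((a : ℤ) * b), ?_, ?_, ?_⟩
  · exact Finset.sum_nonneg fun i _ => Int.emod_nonneg _ habz.ne'
  · calc ∑ i ∈ Finset.range M, (w (1 + i)) % ((a : ℤ) * b)
        ≤ ∑ i ∈ Finset.range M, ((a : ℤ) * b - 1) :=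
          Finset.sum_le_sum fun i _ => by
            have := Int.emod_lt_of_pos (w (1 + i)) habz; omega
      _ = ((N : ℤ) * a) * ((a : ℤ) * b - 1) := by
          rw [Finset.sum_const, Finset.card_range, nsmul_eq_mul]; push_cast [hMdef]; ring
  · show ∑ k ∈ Finset.Icc 1 (M * B), F k = _
    rw [sum_Icc_one_mul M B hM F]
    have inner : ∀ i ∈ Finset.range M, ∑ j ∈ Finset.range B, F (1 + i + M * j)
        = (B : ℤ) * X (1 + i) + ((B : ℤ) * ((w (1 + i)) % ((a : ℤ) * b))
          + ((a : ℤ) * b) * ∑ j ∈ Finset.range B, (j : ℤ)) := by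
      intro i _
      set k0 : ℕ := 1 + i with hk0
      have hXeq : ∀ j : ℕ, X (k0 + M * j) = X k0 := by
        intro j
        show (((k0 + M * j : ℕ) : ℤ) * Ap - c) % Np = ((k0 : ℤ) * Ap - c) % Np
        have h1 : ((k0 + M * j : ℕ) : ℤ) * Ap - c
            = ((k0 : ℤ) * Ap - c) + Np * ((j : ℤ) * ((A : ℤ) * b)) := by
          push_cast [hMdef, hNp, hAp]; ring
        rw [h1, Int.add_mul_emod_self_left]
      have hterm : ∀ j : ℕ, F (k0 + M * j)
          = X k0 + ((w k0 + (j : ℤ) * (((a : ℤ) * b) * ((A : ℤ) * N * n)))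
              % (((a : ℤ) * b) * (B : ℤ))) := by
        intro j
        show X (k0 + M * j)
            + ((((k0 + M * j : ℕ) : ℤ) * Ap - e) % Bp - X (k0 + M * j)) % Bp = _
        rw [hXeq j]
        congr 1
        have step1 : ((((k0 + M * j : ℕ) : ℤ) * Ap - e) % Bp - X k0) % Bp
            = ((((k0 + M * j : ℕ) : ℤ) * Ap - e) - X k0) % Bp := by
          conv_rhs => rw [Int.sub_emod]
          rw [Int.sub_emod ((((k0 + M * j : ℕ) : ℤ) * Ap - e) % Bp),
            Int.emod_emod_of_dvd _ dvd_rfl]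
        rw [step1]
        have step2 : (((k0 + M * j : ℕ) : ℤ) * Ap - e) - X k0
            = w k0 + (j : ℤ) * (((a : ℤ) * b) * ((A : ℤ) * N * n)) := by
          simp only [hw]
          push_cast [hMdef, hAp]; ring
        have step3 : Bp = ((a : ℤ) * b) * (B : ℤ) := by rw [hBp]; ring
        rw [step2, step3]
      calc ∑ j ∈ Finset.range B, F (k0 + M * j)
          = ∑ j ∈ Finset.range B, (X k0
              + ((w k0 + (j : ℤ) * (((a : ℤ) * b) * ((A : ℤ) * N * n)))
                  % (((a : ℤ) * b) * (B : ℤ)))) :=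
            Finset.sum_congr rfl fun j _ => by
              have h := hterm j
              have harg : 1 + i + M * j = k0 + M * j := by omega
              rw [harg]; exact h
        _ = (B : ℤ) * X k0 + ((B : ℤ) * ((w k0) % ((a : ℤ) * b))
              + ((a : ℤ) * b) * ∑ j ∈ Finset.range B, (j : ℤ)) := by
            rw [Finset.sum_add_distrib, Finset.sum_const, Finset.card_range,
              class_sum B hB ((a : ℤ) * b) ((A : ℤ) * N * n) (w k0) habz copZ]
            push_cast
            ring
    rw [Finset.sum_congr rfl inner]
    rw [Finset.sum_add_distrib, Finset.sum_add_distrib, ← Finset.mul_sum, ← Finset.mul_sum,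
      Finset.sum_const, Finset.card_range]
    have hXsum : ∑ i ∈ Finset.range M, X (1 + i)
        = (M : ℤ) * ((-c) % (n : ℤ)) + (n : ℤ) * ∑ i ∈ Finset.range M, (i : ℤ) := by
      have hXi : ∀ i : ℕ, X (1 + i)
          = ((-c + (n : ℤ) * ((A : ℤ) * b)) + (i : ℤ) * ((n : ℤ) * ((A : ℤ) * b)))
              % ((n : ℤ) * (M : ℤ)) := by
        intro i
        show (((1 + i : ℕ) : ℤ) * Ap - c) % Np = _
        congr 1
        · push_cast [hAp]; ring
        · rw [hNp]; push_cast [hMdef]; ring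
      rw [Finset.sum_congr rfl fun i _ => hXi i]
      rw [class_sum M hM (n : ℤ) ((A : ℤ) * b) _ (by exact_mod_cast hnpos) copX]
      congr 1
      rw [Int.add_mul_emod_self_left]
    rw [hXsum]
    push_cast [hMdef]
    ring

/-- Corollary 2 (key step): in the extended model, for every fixed `l`, the
mean of `α^{[l]}` over one period is sandwiched within `±a·b/2` around
`(B' + N' − n)/2 + K + l·N'`. -/
theorem stmt13 (A B N a b n : ℕ) (hA : 0 < A) (hB : 0 < B) (hN : 0 < N)
    (hapos : 0 < a) (hbpos : 0 < b) (hnpos : 0 < n)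
    (ha : a = Nat.gcd (B * a * b) (N * a * n))
    (hb : b = Nat.gcd (A * b * n) (B * a * b))
    (hn : n = Nat.gcd (A * b * n) (N * a * n))
    (ΔB ΔN : ℕ) (l : ℕ) :
    ((B : ℚ) * a * b + (N : ℚ) * a * n - n) / 2 + (extK ΔN n : ℚ) +
          (l : ℚ) * ((N : ℚ) * a * n) - (a : ℚ) * b / 2 ≤
        (1 / ((a : ℚ) * B * N)) *
          ∑ k ∈ Finset.Icc 1 (a * B * N),
            ((aoiExt (A * b * n : ℤ) (B * a * b : ℤ) (N * a * n : ℤ)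
                (ΔB : ℤ) (ΔN : ℤ) l k : ℤ) : ℚ) ∧
      (1 / ((a : ℚ) * B * N)) *
          ∑ k ∈ Finset.Icc 1 (a * B * N),
            ((aoiExt (A * b * n : ℤ) (B * a * b : ℤ) (N * a * n : ℤ)
                (ΔB : ℤ) (ΔN : ℤ) l k : ℤ) : ℚ) ≤
        ((B : ℚ) * a * b + (N : ℚ) * a * n - n) / 2 + (extK ΔN n : ℚ) +
          (l : ℚ) * ((N : ℚ) * a * n) + (a : ℚ) * b / 2 := by
  -- coprimality facts
  have c1 : Nat.Coprime (A * n) (B * a) := by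
    have h1 : A * b * n = b * (A * n) := by ring
    have h2 : B * a * b = b * (B * a) := by ring
    rw [h1, h2, Nat.gcd_mul_left] at hb
    have : b * 1 = b * Nat.gcd (A * n) (B * a) := by omega
    exact (Nat.eq_of_mul_eq_mul_left hbpos this).symm
  have c2 : Nat.Coprime (B * b) (N * n) := by
    have h1 : B * a * b = a * (B * b) := by ring
    have h2 : N * a * n = a * (N * n) := by ring
    rw [h1, h2, Nat.gcd_mul_left] at ha
    have : a * 1 = a * Nat.gcd (B * b) (N * n) := by omega
    exact (Nat.eq_of_mul_eq_mul_left hapos this).symm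
  have c3 : Nat.Coprime (A * b) (N * a) := by
    have h1 : A * b * n = n * (A * b) := by ring
    have h2 : N * a * n = n * (N * a) := by ring
    rw [h1, h2, Nat.gcd_mul_left] at hn
    have : n * 1 = n * Nat.gcd (A * b) (N * a) := by omega
    exact (Nat.eq_of_mul_eq_mul_left hnpos this).symm
  have copZnat : Nat.Coprime (A * N * n) B := by
    have cAB : Nat.Coprime A B :=
      (Nat.Coprime.coprime_dvd_left ⟨n, rfl⟩ c1).coprime_dvd_right ⟨a, rfl⟩
    have cNB : Nat.Coprime N B :=
      ((Nat.Coprime.coprime_dvd_left ⟨b, rfl⟩ c2).coprime_dvd_right ⟨n, rfl⟩).symm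
    have cnB : Nat.Coprime n B :=
      (Nat.Coprime.coprime_dvd_left (⟨A, by ring⟩ : n ∣ A * n) c1).coprime_dvd_right ⟨a, rfl⟩
    exact (cAB.mul cNB).mul cnB
  have copZ : IsCoprime ((A : ℤ) * N * n) (B : ℤ) := by
    have := Nat.isCoprime_iff_coprime.mpr copZnat
    push_cast at this
    exact this
  have copX : IsCoprime ((A : ℤ) * b) ((N * a : ℕ) : ℤ) := by
    have := Nat.isCoprime_iff_coprime.mpr c3
    push_cast at this ⊢
    exact this
  have hNa : 0 < N * a := by positivity
  obtain ⟨T, hT0, hT1, hcore⟩ := core_sum A B N a b n hB hapos hbpos hnpos hNa copZ copX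
    ((ΔN : ℤ) + 1) ((ΔB : ℤ) + 2 + (l : ℤ) * ((N : ℤ) * a * n))
  -- rewrite the aoiExt sum
  have hpt : ∀ k : ℕ, aoiExt ((A : ℤ) * b * n) ((B : ℤ) * a * b) ((N : ℤ) * a * n)
      (ΔB : ℤ) (ΔN : ℤ) l k
      = (2 + (l : ℤ) * ((N : ℤ) * a * n))
        + (((k : ℤ) * ((A : ℤ) * b * n) - ((ΔN : ℤ) + 1)) % ((N : ℤ) * a * n)
          + ((((k : ℤ) * ((A : ℤ) * b * n) - ((ΔB : ℤ) + 2 + (l : ℤ) * ((N : ℤ) * a * n)))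
                % ((B : ℤ) * a * b))
              - (((k : ℤ) * ((A : ℤ) * b * n) - ((ΔN : ℤ) + 1)) % ((N : ℤ) * a * n)))
            % ((B : ℤ) * a * b)) := by
    intro k
    unfold aoiExt
    have e1 : (k : ℤ) * ((A : ℤ) * b * n) - (ΔN : ℤ) - 1
        = (k : ℤ) * ((A : ℤ) * b * n) - ((ΔN : ℤ) + 1) := by ring
    have e2 : (k : ℤ) * ((A : ℤ) * b * n) - (ΔB : ℤ) - 2 - (l : ℤ) * ((N : ℤ) * a * n)
        = (k : ℤ) * ((A : ℤ) * b * n) - ((ΔB : ℤ) + 2 + (l : ℤ) * ((N : ℤ) * a * n)) := by ring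
    rw [e1, e2]
    ring
  have hIcc : (a * B * N) = (N * a * B) := by ring
  have hSZ : ∑ k ∈ Finset.Icc 1 (a * B * N),
      aoiExt ((A : ℤ) * b * n) ((B : ℤ) * a * b) ((N : ℤ) * a * n) (ΔB : ℤ) (ΔN : ℤ) l k
      = ((N * a * B : ℕ) : ℤ) * (2 + (l : ℤ) * ((N : ℤ) * a * n))
        + (((N : ℤ) * a * (B : ℤ)) * ((-((ΔN : ℤ) + 1)) % (n : ℤ))
            + (B : ℤ) * ((n : ℤ) * ∑ i ∈ Finset.range (N * a), (i : ℤ))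
            + (B : ℤ) * T
            + ((N : ℤ) * a) * ((a : ℤ) * b) * (∑ j ∈ Finset.range B, (j : ℤ))) := by
    rw [hIcc]
    rw [Finset.sum_congr rfl fun k _ => hpt k, Finset.sum_add_distrib, hcore]
    congr 1
    rw [Finset.sum_const, Nat.card_Icc]
    simp only [nsmul_eq_mul]
    push_cast
    ring
  -- Gauss sums in ℚ
  have gauss : ∀ m : ℕ, 0 < m →
      ((∑ i ∈ Finset.range m, (i : ℤ) : ℤ) : ℚ) * 2 = (m : ℚ) * ((m : ℚ) - 1) := by
    intro m hm
    have h0 := Finset.sum_range_id_mul_two m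
    have h1 : ((∑ i ∈ Finset.range m, i : ℕ) : ℚ) * 2 = ((m * (m - 1) : ℕ) : ℚ) := by
      exact_mod_cast congrArg (fun t : ℕ => (t : ℚ)) h0
    rw [Nat.cast_mul, Nat.cast_sub hm] at h1
    push_cast at h1 ⊢
    convert h1 using 2
  have gaussM := gauss (N * a) hNa
  have gaussB := gauss B hB
  -- cast the sum identity to ℚ
  have hSQ : ∑ k ∈ Finset.Icc 1 (a * B * N),
      ((aoiExt ((A : ℤ) * b * n) ((B : ℤ) * a * b) ((N : ℤ) * a * n)
          (ΔB : ℤ) (ΔN : ℤ) l k : ℤ) : ℚ)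
      = ((N : ℚ) * a * B) * (2 + (l : ℚ) * ((N : ℚ) * a * n))
        + (((N : ℚ) * a * (B : ℚ)) * (((-((ΔN : ℤ) + 1)) % (n : ℤ) : ℤ) : ℚ)
            + (B : ℚ) * ((n : ℚ) * ((∑ i ∈ Finset.range (N * a), (i : ℤ) : ℤ) : ℚ))
            + (B : ℚ) * ((T : ℤ) : ℚ)
            + ((N : ℚ) * a) * ((a : ℚ) * b) * (((∑ j ∈ Finset.range B, (j : ℤ) : ℤ) : ℚ))) := by
    have := congrArg (fun t : ℤ => (t : ℚ)) hSZ
    push_cast at this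
    convert this using 2 <;> push_cast <;> ring
  -- extK
  have hK : (extK ΔN n : ℚ) = 2 + (((-((ΔN : ℤ) + 1)) % (n : ℤ) : ℤ) : ℚ) := by
    rw [extK_eq ΔN n hnpos]
    push_cast
    ring
  have hQpos : (0 : ℚ) < (a : ℚ) * B * N := by positivity
  have hT0q : (0 : ℚ) ≤ ((T : ℤ) : ℚ) := by exact_mod_cast hT0
  have hT1q : ((T : ℤ) : ℚ) ≤ ((N : ℚ) * a) * ((a : ℚ) * b - 1) := by
    exact_mod_cast hT1
  have hBT0 : (0 : ℚ) ≤ (B : ℚ) * ((T : ℤ) : ℚ) := by positivity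
  have hBT1 : (B : ℚ) * ((T : ℤ) : ℚ) ≤ (B : ℚ) * (((N : ℚ) * a) * ((a : ℚ) * b - 1)) :=
    mul_le_mul_of_nonneg_left hT1q (by positivity)
  push_cast at gaussM gaussB hSQ
  have key : 2 * (∑ k ∈ Finset.Icc 1 (a * B * N),
        ((aoiExt ((A : ℤ) * b * n) ((B : ℤ) * a * b) ((N : ℤ) * a * n)
            (ΔB : ℤ) (ΔN : ℤ) l k : ℤ) : ℚ))
      = ((a : ℚ) * B * N) * (((B : ℚ) * a * b + (N : ℚ) * a * n - n)
            + 2 * (2 + (((-((ΔN : ℤ) + 1)) % (n : ℤ) : ℤ) : ℚ))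
            + 2 * (l : ℚ) * ((N : ℚ) * a * n) - (a : ℚ) * b)
        + 2 * (B : ℚ) * ((T : ℤ) : ℚ) := by
    linear_combination 2 * hSQ + (B : ℚ) * (n : ℚ) * gaussM
      + (N : ℚ) * (a : ℚ) * ((a : ℚ) * (b : ℚ)) * gaussB
  rw [hK]
  constructor
  · rw [div_mul_eq_mul_div, one_mul, le_div_iff₀ hQpos]
    linarith [key, hBT0]
  · rw [div_mul_eq_mul_div, one_mul, div_le_iff₀ hQpos]
    linarith [key, hBT1]
end

section
/- In the extended model with transmission success probability p ∈ (0, 1], write p̄ = 1 − p, let S_l = (1/(aBN))·Σ_{k=1}^{aBN} α^{[l]}_k, let E = Σ_{l=0}^{∞} p·p̄^l·S_l be the expected Age-of-Information and Ê = (B' + N' − n)/2 + K + (p̄/p)·N' its approximation. Then the relative approximation error satisfies |E − Ê| / E ≤ a·b / ( (B−1)·a·b + n·(a·N − 1) + 2·(K + (p̄/p)·N') ). -/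
/-- The mean of the `l`-failure AoI sequence of the extended model over one
period, as a real number. -/
noncomputable def meanAoiExt (A B N a b n ΔB ΔN : ℕ) (l : ℕ) : ℝ :=
  (1 / ((a : ℝ) * B * N)) *
    ∑ k ∈ Finset.Icc 1 (a * B * N),
      ((aoiExt (A * b * n : ℤ) (B * a * b : ℤ) (N * a * n : ℤ)
          (ΔB : ℤ) (ΔN : ℤ) l k : ℤ) : ℝ)

/-- The expected Age-of-Information of the extended model,
`E = Σ_l p·p̄^l·S_l`. -/
noncomputable def expAoiExt (A B N a b n ΔB ΔN : ℕ) (p : ℝ) : ℝ :=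
  ∑' l : ℕ, p * (1 - p) ^ l * meanAoiExt A B N a b n ΔB ΔN l

section AoIHelpers
open Finset

lemma gauss (P : ℕ) : 2 * ∑ j ∈ range P, (j : ℤ) = (P : ℤ) * ((P : ℤ) - 1) := by
  induction P with
  | zero => simp
  | succ P ih =>
      rw [Finset.sum_range_succ]
      push_cast
      push_cast at ih
      ring_nf
      ring_nf at ih
      linarith

lemma two_sum_mod (g P : ℕ) (hg : 0 < g) (hP : 0 < P) (s t : ℤ)
    (hgcd : Int.gcd s ((g : ℤ) * (P : ℤ)) = g) :
    2 * ∑ j ∈ range P, (t + (j : ℤ) * s) % ((g : ℤ) * (P : ℤ))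
      = 2 * (P : ℤ) * (t % g) + (g : ℤ) * (P : ℤ) * ((P : ℤ) - 1) := by
  set M : ℤ := (g : ℤ) * (P : ℤ) with hM
  have hg0 : (0 : ℤ) < g := by exact_mod_cast hg
  have hP0 : (0 : ℤ) < P := by exact_mod_cast hP
  have hMpos : 0 < M := mul_pos hg0 hP0
  have hgs : (g : ℤ) ∣ s := by
    have := Int.gcd_dvd_left (a := s) (b := M)
    rwa [hgcd] at this
  obtain ⟨s', hs'⟩ := hgs
  have hcop : IsCoprime s' (P : ℤ) := by
    rw [Int.isCoprime_iff_gcd_eq_one]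
    have h1 : Int.gcd ((g:ℤ) * s') ((g:ℤ) * (P:ℤ)) = g := by rw [← hs']; exact hgcd
    rw [Int.gcd_mul_left] at h1
    rw [Int.natAbs_natCast g] at h1
    exact Nat.eq_of_mul_eq_mul_left hg (by omega : g * Int.gcd s' (P:ℤ) = g * 1)
  set f : ℕ → ℤ := fun j => (t + (j : ℤ) * s) % M with hf
  have hinj : ∀ x ∈ range P, ∀ y ∈ range P, f x = f y → x = y := by
    intro x hx y hy hxy
    simp only [Finset.mem_range] at hx hy
    have hmodeq : (t + (x:ℤ) * s) ≡ (t + (y:ℤ) * s) [ZMOD M] := hxy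
    have h2 : M ∣ ((y:ℤ) * s - (x:ℤ) * s) := Int.ModEq.dvd (hmodeq.add_left_cancel' t)
    rw [hs'] at h2
    have h3 : (g:ℤ) * ((P:ℤ)) ∣ (g:ℤ) * (((y:ℤ) - (x:ℤ)) * s') := by
      rw [hM] at h2; convert h2 using 1; ring
    have h4 : (P:ℤ) ∣ ((y:ℤ) - (x:ℤ)) * s' := (mul_dvd_mul_iff_left (by positivity : (g:ℤ) ≠ 0)).mp h3
    have h5 : (P:ℤ) ∣ ((y:ℤ) - (x:ℤ)) := (hcop.symm).dvd_of_dvd_mul_right h4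
    have h6 : ((y:ℤ) - (x:ℤ)) = 0 := Int.eq_zero_of_dvd_of_natAbs_lt_natAbs h5 (by omega)
    omega
  have hmem : ∀ j ∈ range P, f j ∈ Finset.image (fun i : ℕ => t % g + (g:ℤ) * i) (range P) := by
    intro j _
    set v : ℤ := f j with hv
    have h0 : 0 ≤ v := Int.emod_nonneg _ (ne_of_gt hMpos)
    have hlt : v < M := Int.emod_lt_of_pos _ hMpos
    have hmod : v % g = t % g := by
      rw [hv, hf]
      simp only []
      rw [hM, Int.emod_emod_of_dvd _ ⟨(P:ℤ), rfl⟩, hs',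
        show t + (j:ℤ)*((g:ℤ)*s') = t + (g:ℤ)*((j:ℤ)*s') by ring, Int.add_mul_emod_self_left]
    have htg0 : 0 ≤ t % g := Int.emod_nonneg _ (by positivity)
    have htgg : t % g < g := Int.emod_lt_of_pos _ hg0
    have hvge : t % g ≤ v := by
      rw [← hmod]
      conv_rhs => rw [← Int.emod_add_mul_ediv v g]
      have : 0 ≤ (g:ℤ) * (v / g) := by
        have : 0 ≤ v / g := Int.ediv_nonneg h0 (le_of_lt hg0)
        positivity
      linarith
    have hdvd : (g:ℤ) ∣ (v - t % g) := by
      have : (v - t % g) % g = 0 := by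
        rw [Int.sub_emod, hmod]
        simp
      exact Int.dvd_of_emod_eq_zero this
    obtain ⟨i, hi⟩ := hdvd
    have hi0 : 0 ≤ i := by nlinarith
    have hiP : i < P := by
      by_contra h
      push_neg at h
      have : (P:ℤ) ≤ i := by exact_mod_cast h
      nlinarith [hM]
    refine Finset.mem_image.mpr ⟨i.toNat, Finset.mem_range.mpr (by omega), ?_⟩
    have : (i.toNat : ℤ) = i := Int.toNat_of_nonneg hi0
    rw [this]; omega
  have hinj2 : ∀ x ∈ range P, ∀ y ∈ range P,
      t % g + (g:ℤ) * x = t % g + (g:ℤ) * y → x = y := by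
    intro x _ y _ h
    have : (x : ℤ) = y := by
      have := h
      rw [add_right_inj, mul_eq_mul_left_iff] at this
      rcases this with h' | h'
      · exact_mod_cast h'
      · exact absurd h' (by positivity)
    exact_mod_cast this
  have himage : Finset.image f (range P) = Finset.image (fun i : ℕ => t % g + (g:ℤ) * i) (range P) := by
    apply Finset.eq_of_subset_of_card_le
    · intro y hy
      obtain ⟨j, hj, rfl⟩ := Finset.mem_image.mp hy
      exact hmem j hj
    · rw [Finset.card_image_of_injOn (fun x hx y hy => hinj x hx y hy),
        Finset.card_range]
      exact le_trans Finset.card_image_le (by rw [Finset.card_range])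
  have hsum : ∑ j ∈ range P, f j = ∑ i ∈ range P, (t % g + (g:ℤ) * i) := by
    have e1 := Finset.sum_image (f := fun x : ℤ => x) (g := f) hinj
    have e2 := Finset.sum_image (f := fun x : ℤ => x) (g := fun i : ℕ => t % g + (g:ℤ) * i) hinj2
    rw [← e1, himage, e2]
  rw [hf] at hsum
  simp only [] at hsum
  rw [hsum, Finset.sum_add_distrib, Finset.sum_const, Finset.card_range, ← Finset.mul_sum]
  have hga := gauss P
  simp only [nsmul_eq_mul]
  rw [hM]
  nlinarith [hga]
lemma sum_range_mul_decomp {M : Type*} [AddCommMonoid M] (f : ℕ → M) (c P : ℕ) :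
    ∑ j ∈ range (c * P), f j = ∑ r ∈ range c, ∑ i ∈ range P, f (r * P + i) := by
  induction c with
  | zero => simp
  | succ c ih => rw [Nat.succ_mul, Finset.sum_range_add, ih, Finset.sum_range_succ]

lemma two_sum_mod_blocks (g P c : ℕ) (hg : 0 < g) (hP : 0 < P) (s t : ℤ)
    (hgcd : Int.gcd s ((g : ℤ) * (P : ℤ)) = g) :
    2 * ∑ j ∈ range (c * P), (t + (j : ℤ) * s) % ((g : ℤ) * (P : ℤ))
      = (c : ℤ) * (2 * (P : ℤ) * (t % g) + (g : ℤ) * (P : ℤ) * ((P : ℤ) - 1)) := by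
  have hgs : (g : ℤ) ∣ s := by
    have := Int.gcd_dvd_left (a := s) (b := (g : ℤ) * (P : ℤ))
    rwa [hgcd] at this
  obtain ⟨s', hs'⟩ := hgs
  rw [sum_range_mul_decomp, Finset.mul_sum]
  have hblock : ∀ r, 2 * ∑ i ∈ range P, (t + ((r * P + i : ℕ) : ℤ) * s) % ((g : ℤ) * (P : ℤ))
      = 2 * (P : ℤ) * (t % g) + (g : ℤ) * (P : ℤ) * ((P : ℤ) - 1) := by
    intro r
    have h1 : ∀ i : ℕ, t + ((r * P + i : ℕ) : ℤ) * s = (t + ((r * P : ℕ) : ℤ) * s) + (i : ℤ) * s := by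
      intro i; push_cast; ring
    calc 2 * ∑ i ∈ range P, (t + ((r * P + i : ℕ) : ℤ) * s) % ((g : ℤ) * (P : ℤ))
        = 2 * ∑ i ∈ range P, ((t + ((r * P : ℕ) : ℤ) * s) + (i : ℤ) * s) % ((g : ℤ) * (P : ℤ)) := by
          congr 1; exact Finset.sum_congr rfl (fun i _ => by rw [h1 i])
      _ = 2 * (P : ℤ) * ((t + ((r * P : ℕ) : ℤ) * s) % g) + (g : ℤ) * (P : ℤ) * ((P : ℤ) - 1) :=
          two_sum_mod g P hg hP s _ hgcd
      _ = 2 * (P : ℤ) * (t % g) + (g : ℤ) * (P : ℤ) * ((P : ℤ) - 1) := by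
          congr 2
          rw [hs', show t + ((r * P : ℕ) : ℤ) * ((g:ℤ) * s') = t + (g:ℤ) * (((r * P : ℕ) : ℤ) * s') by ring,
            Int.add_mul_emod_self_left]
  calc (∑ r ∈ range c, 2 * ∑ i ∈ range P, (t + ((r * P + i : ℕ) : ℤ) * s) % ((g : ℤ) * (P : ℤ)))
      = ∑ r ∈ range c, (2 * (P : ℤ) * (t % g) + (g : ℤ) * (P : ℤ) * ((P : ℤ) - 1)) :=
        Finset.sum_congr rfl (fun r _ => hblock r)
    _ = (c : ℤ) * (2 * (P : ℤ) * (t % g) + (g : ℤ) * (P : ℤ) * ((P : ℤ) - 1)) := by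
        rw [Finset.sum_const, Finset.card_range, nsmul_eq_mul]

lemma ceil_sub_eq_neg_emod (D : ℤ) (n : ℕ) (hn : 0 < n) :
    (⌈(D : ℚ) / (n : ℚ)⌉ : ℤ) * n - D = (-D) % n := by
  have hn0 : (0:ℤ) < n := by exact_mod_cast hn
  have hnQ : (0:ℚ) < n := by exact_mod_cast hn
  have hr0 : 0 ≤ (-D) % n := Int.emod_nonneg _ (by positivity)
  have hrn : (-D) % n < n := Int.emod_lt_of_pos _ hn0
  have hdvd : (n:ℤ) ∣ (D + (-D) % n) := by
    refine ⟨-((-D) / n), ?_⟩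
    linear_combination Int.emod_add_mul_ediv (-D) (n:ℤ)
  obtain ⟨q, hq⟩ := hdvd
  have hqQ : (D : ℚ) + (((-D) % n : ℤ) : ℚ) = (n : ℚ) * q := by exact_mod_cast hq
  have hrnQ : ((((-D) % n : ℤ)) : ℚ) < (n:ℚ) := by exact_mod_cast hrn
  have hr0Q : (0:ℚ) ≤ ((((-D) % n : ℤ)) : ℚ) := by exact_mod_cast hr0
  have hceil : ⌈(D : ℚ) / (n : ℚ)⌉ = q := by
    rw [Int.ceil_eq_iff]
    constructor
    · rw [lt_div_iff₀ hnQ]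
      nlinarith
    · rw [div_le_iff₀ hnQ]
      nlinarith
  rw [hceil, mul_comm]
  linarith [hq]
lemma emod_sub_emod (u x m : ℤ) : (u % m - x) % m = (u - x) % m := by
  conv_rhs => rw [Int.sub_emod]
  rw [Int.sub_emod (u % m) x, Int.emod_emod_of_dvd _ (dvd_refl m)]

-- coprimality extraction
lemma copr_of_gcd {c u v : ℕ} (hc : 0 < c) (h : c = Nat.gcd (c * u) (c * v)) :
    Nat.Coprime u v := by
  rw [Nat.gcd_mul_left] at h
  exact Nat.eq_of_mul_eq_mul_left hc (by omega : c * Nat.gcd u v = c * 1)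

lemma perL (A B N a b n : ℕ) (hB : 0 < B) (hN : 0 < N)
    (hapos : 0 < a) (hbpos : 0 < b) (hnpos : 0 < n)
    (ha : a = Nat.gcd (B * a * b) (N * a * n))
    (hb : b = Nat.gcd (A * b * n) (B * a * b))
    (hn : n = Nat.gcd (A * b * n) (N * a * n))
    (ΔB ΔN : ℕ) (l : ℕ) :
    |2 * (∑ k ∈ Finset.Icc 1 (a * B * N),
          aoiExt (A * b * n : ℤ) (B * a * b : ℤ) (N * a * n : ℤ) (ΔB : ℤ) (ΔN : ℤ) l k)
        - (a * B * N : ℤ) * ((B:ℤ)*a*b + (N:ℤ)*a*n - (n:ℤ) + 2 * extK ΔN n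
            + 2 * (l:ℤ) * ((N:ℤ)*a*n))|
      ≤ (a * B * N : ℤ) * ((a:ℤ) * (b:ℤ)) := by
  -- coprimality facts
  have cAnaB : Nat.Coprime (A * n) (a * B) :=
    copr_of_gcd hbpos (by rw [show A * b * n = b * (A * n) from by ring,
      show B * a * b = b * (a * B) from by ring] at hb; exact hb)
  have cBbNn : Nat.Coprime (B * b) (N * n) :=
    copr_of_gcd hapos (by rw [show B * a * b = a * (B * b) from by ring,
      show N * a * n = a * (N * n) from by ring] at ha; exact ha)
  have cAbNa : Nat.Coprime (A * b) (N * a) :=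
    copr_of_gcd hnpos (by rw [show A * b * n = n * (A * b) from by ring,
      show N * a * n = n * (N * a) from by ring] at hn; exact hn)
  have cAB : Nat.Coprime A B :=
    Nat.Coprime.coprime_dvd_left ⟨n, rfl⟩ (Nat.Coprime.coprime_dvd_right ⟨a, mul_comm a B⟩ cAnaB)
  have cNB : Nat.Coprime N B := by
    have h1 : Nat.Coprime (N * n) (B * b) := cBbNn.symm
    exact Nat.Coprime.coprime_dvd_left ⟨n, rfl⟩ (Nat.Coprime.coprime_dvd_right ⟨b, rfl⟩ h1)
  have cnB : Nat.Coprime n B := by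
    have h1 : Nat.Coprime (N * n) (B * b) := cBbNn.symm
    exact Nat.Coprime.coprime_dvd_left ⟨N, mul_comm N n⟩
      (Nat.Coprime.coprime_dvd_right ⟨b, rfl⟩ h1)
  -- gcd fact 1 (nat)
  have hgcd1N : Nat.gcd (A * b * n) (n * (a * N)) = n := by
    rw [show A * b * n = n * (A * b) from by ring, Nat.gcd_mul_left]
    have : Nat.Coprime (A * b) (a * N) :=
      Nat.Coprime.coprime_dvd_right ⟨1, by ring⟩ cAbNa
    rw [this]; ring
  have hgcd1 : Int.gcd ((A : ℤ) * b * n) ((n : ℤ) * ((a * N : ℕ) : ℤ)) = n := by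
    have e1 : ((A : ℤ) * b * n) = ((A * b * n : ℕ) : ℤ) := by push_cast; ring
    have e2 : ((n : ℤ) * ((a * N : ℕ) : ℤ)) = ((n * (a * N) : ℕ) : ℤ) := by push_cast; ring
    rw [e1, e2, Int.gcd_natCast_natCast, hgcd1N]
  -- gcd fact 2 (nat)
  have hgcd2N : Nat.gcd ((a * N) * (A * b * n)) ((a * b) * B) = a * b := by
    rw [show (a * N) * (A * b * n) = (a * b) * (A * N * n) from by ring, Nat.gcd_mul_left]
    have : Nat.Coprime (A * N * n) B := Nat.Coprime.mul (Nat.Coprime.mul cAB cNB) cnB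
    rw [this]; ring
  have hgcd2 : Int.gcd (((a * N : ℕ) : ℤ) * ((A : ℤ) * b * n)) (((a * b : ℕ) : ℤ) * ((B : ℕ) : ℤ))
      = a * b := by
    have e1 : (((a * N : ℕ) : ℤ) * ((A : ℤ) * b * n)) = (((a * N) * (A * b * n) : ℕ) : ℤ) := by
      push_cast; ring
    have e2 : (((a * b : ℕ) : ℤ) * ((B : ℕ) : ℤ)) = (((a * b) * B : ℕ) : ℤ) := by push_cast; ring
    rw [e1, e2, Int.gcd_natCast_natCast, hgcd2N]
  set M : ℕ := a * B * N with hM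
  set xx : ℕ → ℤ := fun k => ((k:ℤ) * ((A:ℤ)*b*n) - (ΔN:ℤ) - 1) % ((N:ℤ)*(a:ℤ)*(n:ℤ)) with hxx
  set qq : ℕ → ℤ := fun k => (((k:ℤ) * ((A:ℤ)*b*n) - (ΔB:ℤ) - 2 - (l:ℤ)*((N:ℤ)*(a:ℤ)*(n:ℤ))) - xx k)
      % ((B:ℤ)*(a:ℤ)*(b:ℤ)) with hqq
  have hexp : ∀ k : ℕ, aoiExt (A * b * n : ℤ) (B * a * b : ℤ) (N * a * n : ℤ) (ΔB : ℤ) (ΔN : ℤ) l k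
      = (2 + (l:ℤ) * ((N:ℤ)*(a:ℤ)*(n:ℤ))) + xx k + qq k := by
    intro k
    unfold aoiExt
    rw [hqq, hxx]
    simp only []
    rw [emod_sub_emod]
  have hsum0 : (∑ k ∈ Finset.Icc 1 M,
        aoiExt (A * b * n : ℤ) (B * a * b : ℤ) (N * a * n : ℤ) (ΔB : ℤ) (ΔN : ℤ) l k)
      = (M:ℤ) * (2 + (l:ℤ)*((N:ℤ)*(a:ℤ)*(n:ℤ)))
        + (∑ k ∈ Finset.Icc 1 M, xx k) + (∑ k ∈ Finset.Icc 1 M, qq k) := by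
    rw [Finset.sum_congr rfl (fun k _ => hexp k), Finset.sum_add_distrib, Finset.sum_add_distrib,
      Finset.sum_const, Nat.card_Icc]
    simp only [nsmul_eq_mul, Nat.add_sub_cancel]
    try push_cast
    try ring
  have hIR : ∀ f : ℕ → ℤ, ∑ k ∈ Finset.Icc 1 M, f k = ∑ i ∈ Finset.range M, f (1 + i) := by
    intro f
    rw [← Finset.Ico_add_one_right_eq_Icc, Finset.sum_Ico_eq_sum_range]
    simp
  have hMB : M = B * (a * N) := by rw [hM]; ring
  have haN : 0 < a * N := Nat.mul_pos hapos hN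
  -- x-sum
  set cc : ℤ := (-(ΔN:ℤ) - 1) % (n:ℤ) with hcc
  have hxterm : ∀ i : ℕ, xx (1 + i)
      = (((A:ℤ)*b*n - (ΔN:ℤ) - 1) + (i:ℤ) * ((A:ℤ)*b*n)) % ((n:ℤ) * ((a*N : ℕ):ℤ)) := by
    intro i
    rw [hxx]
    simp only []
    rw [show (((1+i : ℕ)):ℤ) * ((A:ℤ)*b*n) - (ΔN:ℤ) - 1
        = ((A:ℤ)*b*n - (ΔN:ℤ) - 1) + (i:ℤ) * ((A:ℤ)*b*n) from by push_cast; ring,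
      show ((N:ℤ)*(a:ℤ)*(n:ℤ)) = ((n:ℤ) * ((a*N : ℕ):ℤ)) from by push_cast; ring]
  have eqB : 2 * (∑ k ∈ Finset.Icc 1 M, xx k)
      = (B:ℤ) * (2 * ((a*N:ℕ):ℤ) * cc + (n:ℤ) * ((a*N:ℕ):ℤ) * (((a*N:ℕ):ℤ) - 1)) := by
    rw [hIR xx]
    rw [show (Finset.range M) = Finset.range (B * (a*N)) from by rw [hMB]]
    rw [Finset.sum_congr rfl (fun i _ => hxterm i)]
    rw [two_sum_mod_blocks n (a*N) B hnpos haN _ _ hgcd1]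
    congr 2
    rw [show (A:ℤ)*b*n - (ΔN:ℤ) - 1 = (-(ΔN:ℤ) - 1) + (n:ℤ)*((A:ℤ)*b) from by ring,
      Int.add_mul_emod_self_left, hcc]
  -- q-sum
  have hxper : ∀ r i : ℕ, xx (1 + (r*(a*N) + i)) = xx (1 + i) := by
    intro r i
    rw [hxx]
    simp only []
    rw [show ((1 + (r*(a*N) + i) : ℕ) : ℤ) * ((A:ℤ)*b*n) - (ΔN:ℤ) - 1
        = ((((1+i:ℕ)):ℤ) * ((A:ℤ)*b*n) - (ΔN:ℤ) - 1) + ((N:ℤ)*(a:ℤ)*(n:ℤ)) * ((A:ℤ)*b*r)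
          from by push_cast; ring,
      Int.add_mul_emod_self_left]
  set tt : ℕ → ℤ := fun i => (((1+i:ℕ):ℤ) * ((A:ℤ)*b*n) - (ΔB:ℤ) - 2 - (l:ℤ)*((N:ℤ)*(a:ℤ)*(n:ℤ)))
      - xx (1+i) with htt
  have hqterm : ∀ r i : ℕ, qq (1 + (r*(a*N) + i))
      = (tt i + (r:ℤ) * (((a*N:ℕ):ℤ) * ((A:ℤ)*b*n))) % (((a*b:ℕ):ℤ) * ((B:ℕ):ℤ)) := by
    intro r i
    rw [hqq]
    simp only []
    rw [hxper r i]
    rw [show (((1 + (r*(a*N) + i) : ℕ)):ℤ) * ((A:ℤ)*b*n) - (ΔB:ℤ) - 2 - (l:ℤ)*((N:ℤ)*(a:ℤ)*(n:ℤ))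
          - xx (1+i) = tt i + (r:ℤ) * (((a*N:ℕ):ℤ) * ((A:ℤ)*b*n)) from by
        rw [htt]; push_cast; ring,
      show ((B:ℤ)*(a:ℤ)*(b:ℤ)) = (((a*b:ℕ):ℤ) * ((B:ℕ):ℤ)) from by push_cast; ring]
  set T3 : ℤ := ∑ i ∈ Finset.range (a*N), (tt i % ((a*b : ℕ):ℤ)) with hT3
  have eqC : 2 * (∑ k ∈ Finset.Icc 1 M, qq k)
      = 2 * (B:ℤ) * T3 + ((a*N:ℕ):ℤ) * (((a*b:ℕ):ℤ) * (B:ℤ) * ((B:ℤ) - 1)) := by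
    rw [hIR qq]
    rw [show (Finset.range M) = Finset.range (B * (a*N)) from by rw [hMB]]
    rw [sum_range_mul_decomp (fun j => qq (1 + j)) B (a*N)]
    rw [Finset.sum_comm]
    rw [Finset.mul_sum]
    have hinner : ∀ i ∈ Finset.range (a*N),
        2 * ∑ r ∈ Finset.range B, qq (1 + (r * (a*N) + i))
          = 2 * (B:ℤ) * (tt i % ((a*b:ℕ):ℤ)) + ((a*b:ℕ):ℤ) * (B:ℤ) * ((B:ℤ) - 1) := by
      intro i _
      rw [Finset.sum_congr rfl (fun r _ => hqterm r i)]
      exact two_sum_mod (a*b) B (Nat.mul_pos hapos hbpos) hB _ _ hgcd2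
    rw [Finset.sum_congr rfl hinner, Finset.sum_add_distrib, Finset.sum_const, Finset.card_range,
      nsmul_eq_mul, ← Finset.mul_sum, ← hT3]
  -- bounds on T3
  have hab0 : (0:ℤ) < ((a*b:ℕ):ℤ) := by exact_mod_cast Nat.mul_pos hapos hbpos
  have hT3lo : 0 ≤ T3 := Finset.sum_nonneg fun i _ => Int.emod_nonneg _ (ne_of_gt hab0)
  have hT3hi : T3 ≤ ((a*N:ℕ):ℤ) * (((a*b:ℕ):ℤ) - 1) := by
    rw [hT3]
    calc (∑ i ∈ Finset.range (a*N), (tt i % ((a*b : ℕ):ℤ)))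
        ≤ ∑ i ∈ Finset.range (a*N), (((a*b : ℕ):ℤ) - 1) :=
          Finset.sum_le_sum fun i _ => by
            have := Int.emod_lt_of_pos (tt i) hab0
            omega
      _ = ((a*N:ℕ):ℤ) * (((a*b:ℕ):ℤ) - 1) := by
          rw [Finset.sum_const, Finset.card_range, nsmul_eq_mul]
  -- extK
  have hextK : extK ΔN n = 2 + cc := by
    unfold extK
    rw [hcc]
    have := ceil_sub_eq_neg_emod ((ΔN:ℤ) + 1) n hnpos
    rw [show (((ΔN:ℤ) + 1 : ℤ) : ℚ) = ((ΔN : ℚ) + 1) from by push_cast; ring] at this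
    rw [this]
    ring_nf
  -- final assembly
  rw [hsum0, hextK]
  have hBpos : (0:ℤ) < (B:ℤ) := by exact_mod_cast hB
  have h2B : 2 * (B:ℤ) * T3 ≤ 2 * (B:ℤ) * (((a*N:ℕ):ℤ) * (((a*b:ℕ):ℤ) - 1)) := by
    apply mul_le_mul_of_nonneg_left hT3hi
    positivity
  have h2Blo : 0 ≤ 2 * (B:ℤ) * T3 := by positivity
  rw [abs_le]
  push_cast [hM] at eqB eqC h2B h2Blo ⊢
  constructor
  · linarith [eqB, eqC, h2Blo]
  · linarith [eqB, eqC, h2B, mul_pos (mul_pos (show (0:ℤ) < a from by exact_mod_cast hapos) hBpos) (show (0:ℤ) < N from by exact_mod_cast hN)]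

end AoIHelpers

/-- Corollary 2, eq. (18): the relative error of the approximation
`Ê = (B' + N' − n)/2 + K + (p̄/p)·N'` of the expected AoI `E` of the extended
model is at most `a·b / ((B−1)·a·b + n·(a·N − 1) + 2·(K + (p̄/p)·N'))`. -/
theorem stmt16 (A B N a b n : ℕ) (hA : 0 < A) (hB : 0 < B) (hN : 0 < N)
    (hapos : 0 < a) (hbpos : 0 < b) (hnpos : 0 < n)
    (ha : a = Nat.gcd (B * a * b) (N * a * n))
    (hb : b = Nat.gcd (A * b * n) (B * a * b))
    (hn : n = Nat.gcd (A * b * n) (N * a * n))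
    (ΔB ΔN : ℕ) (p : ℝ) (hp0 : 0 < p) (hp1 : p ≤ 1) :
    |expAoiExt A B N a b n ΔB ΔN p -
          (((B : ℝ) * a * b + (N : ℝ) * a * n - n) / 2 + (extK ΔN n : ℝ) +
            ((1 - p) / p) * ((N : ℝ) * a * n))| /
        expAoiExt A B N a b n ΔB ΔN p ≤
      ((a : ℝ) * b) /
        (((B : ℝ) - 1) * ((a : ℝ) * b) + (n : ℝ) * ((a : ℝ) * N - 1) +
          2 * ((extK ΔN n : ℝ) + ((1 - p) / p) * ((N : ℝ) * a * n))) := by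
  have hMpos : 0 < a * B * N := by positivity
  have hMR : (0:ℝ) < ((a * B * N : ℕ) : ℝ) := by exact_mod_cast hMpos
  set S : ℕ → ℝ := meanAoiExt A B N a b n ΔB ΔN with hS
  set Kr : ℝ := ((extK ΔN n : ℤ) : ℝ) with hKr
  set Np : ℝ := (N : ℝ) * a * n with hNp
  set c1 : ℝ := ((B : ℝ) * a * b + Np - n) / 2 + Kr with hc1
  set ab2 : ℝ := (a : ℝ) * b / 2 with hab2
  -- per-l deviation bound
  have hdev : ∀ l : ℕ, |S l - (c1 + (l:ℝ) * Np)| ≤ ab2 := by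
    intro l
    have hZ := perL A B N a b n hB hN hapos hbpos hnpos ha hb hn ΔB ΔN l
    set SZ : ℤ := ∑ k ∈ Finset.Icc 1 (a * B * N),
        aoiExt (A * b * n : ℤ) (B * a * b : ℤ) (N * a * n : ℤ) (ΔB : ℤ) (ΔN : ℤ) l k with hSZ
    have hcast : ∑ k ∈ Finset.Icc 1 (a * B * N),
        ((aoiExt (A * b * n : ℤ) (B * a * b : ℤ) (N * a * n : ℤ) (ΔB : ℤ) (ΔN : ℤ) l k : ℤ) : ℝ)
        = ((SZ : ℤ) : ℝ) := by
      rw [hSZ]; push_cast; rfl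
    have hmean : S l = (1 / ((a : ℝ) * B * N)) * ((SZ : ℤ) : ℝ) := by
      rw [hS]; unfold meanAoiExt; rw [hcast]
    set XR : ℝ := (B : ℝ) * a * b + Np - n + 2 * Kr + 2 * (l:ℝ) * Np with hXR
    have hR : |2 * ((SZ : ℤ) : ℝ) - ((a * B * N : ℕ) : ℝ) * XR|
        ≤ ((a * B * N : ℕ) : ℝ) * ((a : ℝ) * b) := by
      have h1 := abs_le.mp hZ
      rw [abs_le]
      constructor
      · have thisR := (@Int.cast_le ℝ _ _ _).mpr h1.1
        push_cast at thisR
        rw [hXR, hNp, hKr]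
        push_cast
        linarith
      · have thisR := (@Int.cast_le ℝ _ _ _).mpr h1.2
        push_cast at thisR
        rw [hXR, hNp, hKr]
        push_cast
        linarith
    have hMR2 : ((a * B * N : ℕ) : ℝ) = (a : ℝ) * B * N := by push_cast; ring
    have he : S l - (c1 + (l:ℝ) * Np)
        = (2 * ((SZ : ℤ) : ℝ) - ((a * B * N : ℕ) : ℝ) * XR) / (2 * ((a * B * N : ℕ) : ℝ)) := by
      rw [hmean, hc1, hXR, hMR2]
      field_simp
    rw [he, abs_div, abs_of_pos (by positivity : (0:ℝ) < 2 * ((a * B * N : ℕ) : ℝ))]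
    rw [div_le_iff₀ (by positivity : (0:ℝ) < 2 * ((a * B * N : ℕ) : ℝ))]
    calc |2 * ((SZ : ℤ) : ℝ) - ((a * B * N : ℕ) : ℝ) * XR|
        ≤ ((a * B * N : ℕ) : ℝ) * ((a : ℝ) * b) := hR
      _ = ab2 * (2 * ((a * B * N : ℕ) : ℝ)) := by rw [hab2]; ring
  -- series setup
  set r : ℝ := 1 - p with hrdef
  have hr0 : 0 ≤ r := by rw [hrdef]; linarith
  have hr1 : r < 1 := by rw [hrdef]; linarith
  have hrn : ‖r‖ < 1 := by rw [Real.norm_eq_abs, abs_of_nonneg hr0]; exact hr1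
  have hgeo : Summable (fun l : ℕ => r ^ l) := summable_geometric_of_lt_one hr0 hr1
  have hlgeo : Summable (fun l : ℕ => (l : ℝ) * r ^ l) := by
    have h := summable_pow_mul_geometric_of_norm_lt_one (R := ℝ) 1 hrn
    refine h.congr fun l => by ring
  have hNp0 : 0 ≤ Np := by rw [hNp]; positivity
  have hab20 : 0 ≤ ab2 := by rw [hab2]; positivity
  have hsum1 : Summable (fun l : ℕ => p * r ^ l * (c1 + (l : ℝ) * Np)) := by
    have h1 : Summable (fun l : ℕ => p * c1 * r ^ l) := hgeo.mul_left _
    have h2 : Summable (fun l : ℕ => p * Np * ((l : ℝ) * r ^ l)) := hlgeo.mul_left _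
    refine (h1.add h2).congr fun l => by ring
  have hbound : ∀ l : ℕ, ‖p * r ^ l * (S l - (c1 + (l : ℝ) * Np))‖ ≤ p * ab2 * r ^ l := by
    intro l
    calc ‖p * r ^ l * (S l - (c1 + (l : ℝ) * Np))‖
        = p * r ^ l * |S l - (c1 + (l : ℝ) * Np)| := by
          rw [Real.norm_eq_abs, abs_mul, abs_mul, abs_of_pos hp0,
            abs_of_nonneg (pow_nonneg hr0 l)]
      _ ≤ p * r ^ l * ab2 := by
          apply mul_le_mul_of_nonneg_left (hdev l) (by positivity)
      _ = p * ab2 * r ^ l := by ring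
  have hsum2 : Summable (fun l : ℕ => p * r ^ l * (S l - (c1 + (l : ℝ) * Np))) :=
    Summable.of_norm_bounded (hgeo.mul_left (p * ab2)) hbound
  have htsum_geo : ∑' l : ℕ, r ^ l = (1 - r)⁻¹ := tsum_geometric_of_lt_one hr0 hr1
  have htsum_lgeo : ∑' l : ℕ, (l : ℝ) * r ^ l = r / (1 - r) ^ 2 :=
    tsum_coe_mul_geometric_of_norm_lt_one hrn
  have h1r : 1 - r = p := by rw [hrdef]; ring
  have hp' : p ≠ 0 := ne_of_gt hp0
  have hEdecomp : expAoiExt A B N a b n ΔB ΔN p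
      = (c1 + (r / p) * Np) + ∑' l : ℕ, p * r ^ l * (S l - (c1 + (l : ℝ) * Np)) := by
    unfold expAoiExt
    have e0 : ∀ l : ℕ, p * (1 - p) ^ l * meanAoiExt A B N a b n ΔB ΔN l
        = p * r ^ l * (c1 + (l : ℝ) * Np) + p * r ^ l * (S l - (c1 + (l : ℝ) * Np)) := by
      intro l
      rw [← hrdef, ← hS]
      ring
    rw [tsum_congr e0, Summable.tsum_add hsum1 hsum2]
    congr 1
    have e1 : ∀ l : ℕ, p * r ^ l * (c1 + (l : ℝ) * Np)
        = p * c1 * r ^ l + p * Np * ((l : ℝ) * r ^ l) := fun l => by ring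
    rw [tsum_congr e1, Summable.tsum_add (hgeo.mul_left _) (hlgeo.mul_left _), tsum_mul_left,
      tsum_mul_left, htsum_geo, htsum_lgeo, h1r]
    field_simp
  set Δ : ℝ := ∑' l : ℕ, p * r ^ l * (S l - (c1 + (l : ℝ) * Np)) with hDel
  have hΔabs : |Δ| ≤ ab2 := by
    have hsumnorm : Summable (fun l : ℕ => ‖p * r ^ l * (S l - (c1 + (l : ℝ) * Np))‖) :=
      Summable.of_nonneg_of_le (fun l => norm_nonneg _) hbound (hgeo.mul_left (p * ab2))
    have hnorm : ‖Δ‖ ≤ ∑' l : ℕ, ‖p * r ^ l * (S l - (c1 + (l : ℝ) * Np))‖ := by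
      rw [hDel]
      exact norm_tsum_le_tsum_norm hsumnorm
    have h2 : (∑' l : ℕ, ‖p * r ^ l * (S l - (c1 + (l : ℝ) * Np))‖)
        ≤ ∑' l : ℕ, p * ab2 * r ^ l :=
      Summable.tsum_le_tsum hbound hsumnorm (hgeo.mul_left (p * ab2))
    have h3 : (∑' l : ℕ, p * ab2 * r ^ l) = ab2 := by
      rw [tsum_mul_left, htsum_geo, h1r]
      field_simp
    rw [Real.norm_eq_abs] at hnorm
    linarith
  -- K ≥ 2 and positivity facts
  have hK2 : (2:ℝ) ≤ Kr := by
    rw [hKr]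
    have h2 : (2:ℤ) ≤ extK ΔN n := by
      unfold extK
      have hceq := ceil_sub_eq_neg_emod ((ΔN:ℤ) + 1) n hnpos
      rw [show ((((ΔN:ℤ) + 1) : ℤ) : ℚ) = ((ΔN:ℚ) + 1) from by push_cast; ring] at hceq
      rw [hceq]
      have := Int.emod_nonneg (-((ΔN:ℤ) + 1)) (show ((n:ℕ):ℤ) ≠ 0 from by exact_mod_cast hnpos.ne')
      linarith
    exact_mod_cast h2
  have hB1 : (1:ℝ) ≤ (B:ℝ) := by exact_mod_cast hB
  have haN1 : (1:ℝ) ≤ (a:ℝ) * (N:ℝ) := by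
    have h := Nat.mul_pos hapos hN
    have : (1:ℝ) ≤ ((a * N : ℕ) : ℝ) := by exact_mod_cast h
    push_cast at this
    linarith
  have hEx : expAoiExt A B N a b n ΔB ΔN p = (c1 + r / p * Np) + Δ := by
    rw [hEdecomp, hDel]
  have hhalf : c1 + r / p * Np - ab2
      = (((B:ℝ) - 1) * ((a:ℝ) * b) + (n:ℝ) * ((a:ℝ) * N - 1) + 2 * (Kr + r / p * Np)) / 2 := by
    rw [hc1, hab2, hNp]
    field_simp
    ring
  have hDpos : 0 < ((B:ℝ) - 1) * ((a:ℝ) * b) + (n:ℝ) * ((a:ℝ) * N - 1) + 2 * (Kr + r / p * Np) := by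
    have t1 : 0 ≤ ((B:ℝ) - 1) * ((a:ℝ) * b) := mul_nonneg (by linarith) (by positivity)
    have t2 : 0 ≤ (n:ℝ) * ((a:ℝ) * N - 1) := mul_nonneg (by positivity) (by linarith)
    have t3 : 0 ≤ r / p * Np := mul_nonneg (div_nonneg hr0 hp0.le) hNp0
    linarith
  have hΔlo : -ab2 ≤ Δ := by
    have := abs_le.mp hΔabs
    linarith [this.1]
  have hEge : (((B:ℝ) - 1) * ((a:ℝ) * b) + (n:ℝ) * ((a:ℝ) * N - 1) + 2 * (Kr + r / p * Np)) / 2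
      ≤ (c1 + r / p * Np) + Δ := by
    linarith [hhalf, hΔlo]
  have hE0 : 0 < (c1 + r / p * Np) + Δ := by linarith [hDpos, hEge]
  rw [hEx, show ((c1 + r / p * Np) + Δ) - (c1 + r / p * Np) = Δ from by ring]
  rw [div_le_div_iff₀ hE0 hDpos]
  have h1 : |Δ| * (((B:ℝ) - 1) * ((a:ℝ) * b) + (n:ℝ) * ((a:ℝ) * N - 1) + 2 * (Kr + r / p * Np))
      ≤ ab2 * (((B:ℝ) - 1) * ((a:ℝ) * b) + (n:ℝ) * ((a:ℝ) * N - 1) + 2 * (Kr + r / p * Np)) :=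
    mul_le_mul_of_nonneg_right hΔabs hDpos.le
  have h2 : ((a:ℝ) * b) * ((((B:ℝ) - 1) * ((a:ℝ) * b) + (n:ℝ) * ((a:ℝ) * N - 1)
        + 2 * (Kr + r / p * Np)) / 2) ≤ ((a:ℝ) * b) * ((c1 + r / p * Np) + Δ) :=
    mul_le_mul_of_nonneg_left hEge (by positivity)
  have heq : ab2 * (((B:ℝ) - 1) * ((a:ℝ) * b) + (n:ℝ) * ((a:ℝ) * N - 1) + 2 * (Kr + r / p * Np))
      = ((a:ℝ) * b) * ((((B:ℝ) - 1) * ((a:ℝ) * b) + (n:ℝ) * ((a:ℝ) * N - 1)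
        + 2 * (Kr + r / p * Np)) / 2) := by
    rw [hab2]
    ring
  linarith
end

section
/- Let a, b, n, N be positive integers with gcd(n, b) = 1. Then Σ_{i=0}^{a−1} Σ_{j=0}^{N−1} ⌈( ((j − ⌊i·b/a⌋)·n) % b ) / b⌉ = a·N − a·⌊N/b⌋ − ⌈(N % b)·a/b⌉, where the inner ⌈·⌉ and the outer ⌈·⌉ are ceilings of rational numbers. -/
section aux17

private lemma stmt17.lemA (b : ℕ) (hb : 0 < b) (x : ℤ) :
    ⌈((x % (b:ℤ) : ℤ) : ℚ) / (b : ℚ)⌉ = if (b:ℤ) ∣ x then 0 else 1 := by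
  have hb' : (0:ℚ) < b := by positivity
  by_cases hd : (b:ℤ) ∣ x
  · simp [Int.emod_eq_zero_of_dvd hd, hd]
  · rw [if_neg hd]
    have h0 : 0 < x % (b:ℤ) := (Int.emod_nonneg x (by exact_mod_cast hb.ne')).lt_of_ne
      (fun hh => hd (Int.dvd_of_emod_eq_zero hh.symm))
    have h1 : x % (b:ℤ) < b := Int.emod_lt_of_pos x (by exact_mod_cast hb)
    have h0' : (0:ℚ) < ((x % (b:ℤ) : ℤ) : ℚ) := by exact_mod_cast h0
    have h1' : ((x % (b:ℤ) : ℤ) : ℚ) ≤ b := by exact_mod_cast h1.le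
    rw [Int.ceil_eq_iff]
    refine ⟨by norm_num; exact div_pos h0' hb', ?_⟩
    push_cast
    rw [div_le_one hb']; exact h1'

private lemma stmt17.lemB (b N c : ℕ) (hb : 0 < b) (hc : c < b) :
    ⌈((N:ℚ) - (c:ℚ)) / (b:ℚ)⌉ = (N / b : ℕ) + (if c < N % b then 1 else 0) := by
  have hb' : (0:ℚ) < b := by positivity
  have hN : (N:ℚ) = (b:ℚ) * (N/b : ℕ) + (N % b : ℕ) := by
    exact_mod_cast congrArg (Nat.cast : ℕ → ℚ) (Nat.div_add_mod N b).symm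
  rw [hN]
  have : ((b:ℚ) * (N/b : ℕ) + (N % b : ℕ) - c) / b
      = ((N % b : ℕ) - (c:ℚ)) / b + (N/b : ℕ) := by
    field_simp; ring
  rw [this, Int.ceil_add_natCast]
  have hm : (N % b : ℕ) < b := Nat.mod_lt _ hb
  by_cases hcm : c < N % b
  · rw [if_pos hcm]
    have h1 : ⌈((N % b : ℕ) - (c:ℚ)) / b⌉ = 1 := by
      rw [Int.ceil_eq_iff]
      constructor
      · norm_num
        apply div_pos _ hb'
        have : (c:ℚ) < (N % b : ℕ) := by exact_mod_cast hcm
        linarith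
      · push_cast
        rw [div_le_one hb']
        have h2 : ((N % b : ℕ):ℚ) < b := by exact_mod_cast hm
        have h3 : (0:ℚ) ≤ c := by positivity
        linarith
    rw [h1]; ring
  · rw [if_neg hcm]
    have h1 : ⌈((N % b : ℕ) - (c:ℚ)) / b⌉ = 0 := by
      rw [Int.ceil_eq_iff]
      constructor
      · norm_num
        rw [neg_lt, ← neg_div, div_lt_one hb']
        have h2 : (c:ℚ) < b := by exact_mod_cast hc
        have h3 : (0:ℚ) ≤ (N % b : ℕ) := by positivity
        linarith
      · push_cast
        apply div_nonpos_of_nonpos_of_nonneg _ hb'.le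
        have h4 : ((N % b : ℕ):ℚ) ≤ c := by exact_mod_cast Nat.le_of_not_lt hcm
        linarith
    rw [h1]; ring

private lemma stmt17.lemC (b N v : ℕ) (hb : 0 < b) (hv : v < b) :
    (((Finset.range N).filter (fun j : ℕ => (b:ℤ) ∣ (j:ℤ) - (v:ℤ))).card : ℤ)
      = ⌈((N:ℚ) - (v:ℚ)) / (b:ℚ)⌉ := by
  have : ((Finset.range N).filter (fun j : ℕ => (b:ℤ) ∣ (j:ℤ) - (v:ℤ)))
      = ((Finset.range N).filter (· ≡ v [MOD b])) := by
    apply Finset.filter_congr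
    intro j _
    rw [Nat.modEq_iff_dvd]
    exact ⟨fun hh => (dvd_sub_comm).mp hh, fun hh => (dvd_sub_comm).mp hh⟩
  rw [this, ← Nat.count_eq_card_filter_range, Nat.count_modEq_card_eq_ceil _ hb,
    Nat.mod_eq_of_lt hv]

private lemma stmt17.lemD (a b m : ℕ) (ha : 0 < a) (hb : 0 < b) (hm : m < b) :
    (((Finset.range a).filter (fun i => i * b < m * a)).card : ℤ)
      = ⌈((m:ℚ) * (a:ℚ)) / (b:ℚ)⌉ := by
  have hb' : (0:ℚ) < b := by positivity
  set K : ℤ := ⌈((m:ℚ) * (a:ℚ)) / (b:ℚ)⌉ with hK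
  have hK0 : 0 ≤ K := Int.ceil_nonneg (by positivity)
  have hKa : K ≤ (a:ℤ) := by
    rw [hK, Int.ceil_le, div_le_iff₀ hb']
    push_cast
    have : (m:ℚ) ≤ b := by exact_mod_cast hm.le
    have ha' : (0:ℚ) ≤ a := by positivity
    nlinarith
  have hcond : ∀ i : ℕ, (i * b < m * a ↔ i < K.toNat) := by
    intro i
    rw [Int.lt_toNat, hK, Int.lt_ceil, lt_div_iff₀ hb']
    push_cast
    norm_cast
  have : ((Finset.range a).filter (fun i => i * b < m * a))
      = Finset.range (K.toNat) := by
    ext x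
    simp only [Finset.mem_filter, Finset.mem_range, hcond]
    refine ⟨fun hh => hh.2, fun hh => ⟨?_, hh⟩⟩
    have h1 : (x:ℤ) < K := by rw [← Int.lt_toNat]; exact hh
    have := h1.trans_le hKa
    exact_mod_cast this
  rw [this, Finset.card_range, Int.toNat_of_nonneg hK0]

end aux17

/-- Equation (40): for positive `a`, `b`, `n`, `N` with `gcd(n, b) = 1`,
`Σ_{i<a} Σ_{j<N} ⌈(((j − ⌊i·b/a⌋)·n) % b)/b⌉ = a·N − a·⌊N/b⌋ − ⌈(N % b)·a/b⌉`. -/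
theorem stmt17 (a b n N : ℕ) (hapos : 0 < a) (hbpos : 0 < b) (hnpos : 0 < n)
    (hNpos : 0 < N) (h : Nat.gcd n b = 1) :
    (∑ i ∈ Finset.range a, ∑ j ∈ Finset.range N,
        ⌈((((((j : ℤ) - ⌊(i : ℚ) * (b : ℚ) / (a : ℚ)⌋) * (n : ℤ)) % (b : ℤ)) : ℤ) : ℚ) /
          (b : ℚ)⌉) =
      (a : ℤ) * N - (a : ℤ) * ⌊(N : ℚ) / (b : ℚ)⌋ -
        ⌈((N % b : ℕ) : ℚ) * (a : ℚ) / (b : ℚ)⌉ := by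
  have hcop : IsCoprime (b:ℤ) (n:ℤ) := by
    rw [Int.isCoprime_iff_gcd_eq_one, Int.gcd_natCast_natCast, Nat.gcd_comm]
    exact h
  -- the floor ⌊i·b/a⌋ is the natural number i*b/a
  have hfloor : ∀ i : ℕ, ⌊(i : ℚ) * (b : ℚ) / (a : ℚ)⌋ = ((i * b / a : ℕ) : ℤ) := by
    intro i
    rw [show (i:ℚ) * (b:ℚ) = (((i * b : ℕ) : ℤ) : ℚ) by push_cast; ring,
      show ((a:ℚ)) = ((a : ℕ) : ℚ) from rfl, Rat.floor_intCast_div_natCast]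
    exact_mod_cast (Int.natCast_div (i*b) a).symm
  have hc_lt : ∀ i : ℕ, i < a → i * b / a < b := by
    intro i hi
    rw [Nat.div_lt_iff_lt_mul hapos]
    calc i * b < a * b := (Nat.mul_lt_mul_right hbpos).mpr hi
    _ = b * a := Nat.mul_comm a b
  -- inner sum
  have hinner : ∀ i ∈ Finset.range a,
      (∑ j ∈ Finset.range N,
        ⌈((((((j : ℤ) - ⌊(i : ℚ) * (b : ℚ) / (a : ℚ)⌋) * (n : ℤ)) % (b : ℤ)) : ℤ) : ℚ) /
          (b : ℚ)⌉)
      = (N : ℤ) - ((N / b : ℕ) + (if i * b / a < N % b then 1 else 0)) := by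
    intro i hi
    have hib : i * b / a < b := hc_lt i (Finset.mem_range.mp hi)
    have step : ∀ j ∈ Finset.range N,
        ⌈((((((j : ℤ) - ⌊(i : ℚ) * (b : ℚ) / (a : ℚ)⌋) * (n : ℤ)) % (b : ℤ)) : ℤ) : ℚ) /
          (b : ℚ)⌉ = 1 - (if (b:ℤ) ∣ (j:ℤ) - ((i * b / a : ℕ) : ℤ) then 1 else 0) := by
      intro j _
      rw [hfloor i, stmt17.lemA b hbpos]
      have hdvd : ((b:ℤ) ∣ ((j:ℤ) - ((i * b / a : ℕ) : ℤ)) * (n:ℤ))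
          ↔ (b:ℤ) ∣ (j:ℤ) - ((i * b / a : ℕ) : ℤ) :=
        ⟨fun hh => hcop.dvd_of_dvd_mul_right hh, fun hh => hh.mul_right _⟩
      by_cases hd : (b:ℤ) ∣ (j:ℤ) - ((i * b / a : ℕ) : ℤ)
      · rw [if_pos (hdvd.mpr hd), if_pos hd]; ring
      · rw [if_neg (fun hh => hd (hdvd.mp hh)), if_neg hd]; ring
    have hcount := (stmt17.lemC b N (i*b/a) hbpos hib).trans
      (stmt17.lemB b N (i*b/a) hbpos hib)
    rw [Finset.sum_congr rfl step, Finset.sum_sub_distrib, Finset.sum_const,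
      Finset.card_range, Finset.sum_boole, hcount]
    push_cast
    ring
  -- now the outer sum
  rw [Finset.sum_congr rfl hinner, Finset.sum_sub_distrib, Finset.sum_const,
    Finset.card_range, Finset.sum_add_distrib, Finset.sum_const, Finset.card_range,
    Finset.sum_boole]
  have hm : N % b < b := Nat.mod_lt _ hbpos
  have hsetEq : ((Finset.range a).filter (fun i => i * b / a < N % b))
      = ((Finset.range a).filter (fun i => i * b < (N % b) * a)) := by
    apply Finset.filter_congr
    intro i _
    rw [Nat.div_lt_iff_lt_mul hapos]
  rw [hsetEq, stmt17.lemD a b (N % b) hapos hbpos hm]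
  have hNfloor : ⌊(N : ℚ) / (b : ℚ)⌋ = ((N / b : ℕ) : ℤ) := by
    rw [show ((N:ℚ)) = (((N : ℕ) : ℤ) : ℚ) from by push_cast; ring,
      show ((b:ℚ)) = ((b : ℕ) : ℚ) from rfl, Rat.floor_intCast_div_natCast]
    exact_mod_cast (Int.natCast_div N b).symm
  rw [hNfloor]
  push_cast
  ring
end

section
/- Let A, B, a, b, n be positive integers with gcd(n·A, B) = 1, and set A' = A·b·n and B' = B·a·b. Then for every nonnegative integer r, the multiset { ((i·a + r)·A') % B' : i = 1, …, B } equals the multiset { (r·A' % (a·b)) + m·a·b : m = 0, 1, …, B−1 }. -/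
/-- Equation (34): for positive `A`, `B`, `a`, `b`, `n` with `gcd(n·A, B) = 1`,
`A' = A·b·n` and `B' = B·a·b`, for every `r ≥ 0` the multiset
`{((i·a + r)·A') % B' : i = 1,…,B}` equals the multiset
`{(r·A' % (a·b)) + m·a·b : m = 0,…,B−1}`. -/
theorem stmt19 (A B a b n : ℕ) (hA : 0 < A) (hB : 0 < B)
    (hapos : 0 < a) (hbpos : 0 < b) (hnpos : 0 < n)
    (h : Nat.gcd (n * A) B = 1) (r : ℕ) :
    (Finset.Icc 1 B).val.map
        (fun i => (((i : ℤ) * a + r) * ((A : ℤ) * b * n)) % ((B : ℤ) * a * b)) =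
      (Multiset.range B).map
        (fun m => ((r : ℤ) * ((A : ℤ) * b * n)) % ((a : ℤ) * b) +
          (m : ℤ) * ((a : ℤ) * b)) := by
  have hab : 0 < a * b := Nat.mul_pos hapos hbpos
  set s := r * (A * b * n) % (a * b) with hs
  set q := r * (A * b * n) / (a * b) with hq
  have hrs : r * (A * b * n) = (a * b) * q + s := (Nat.div_add_mod _ _).symm
  set σ : ℕ → ℕ := fun j => ((j + 1) * A * n + q) % B with hσ
  -- key pointwise computation (in ℕ)
  have key : ∀ j : ℕ, ((j + 1) * a + r) * (A * b * n) % (B * a * b)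
      = s + σ j * (a * b) := by
    intro j
    set t := (j + 1) * A * n + q with ht
    have hx : ((j + 1) * a + r) * (A * b * n)
        = (s + t % B * (a * b)) + (B * a * b) * (t / B) := by
      calc ((j + 1) * a + r) * (A * b * n)
          = (a * b) * ((j + 1) * A * n) + r * (A * b * n) := by ring
        _ = (a * b) * ((j + 1) * A * n) + ((a * b) * q + s) := by rw [hrs]
        _ = (a * b) * t + s := by rw [ht]; ring
        _ = (a * b) * (B * (t / B) + t % B) + s := by rw [Nat.div_add_mod]
        _ = (s + t % B * (a * b)) + (B * a * b) * (t / B) := by ring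
    have hlt : s + t % B * (a * b) < B * a * b := by
      have h1 : s < a * b := Nat.mod_lt _ hab
      have h2 : t % B + 1 ≤ B := Nat.mod_lt _ hB
      calc s + t % B * (a * b) < a * b + t % B * (a * b) := by omega
        _ = (t % B + 1) * (a * b) := by ring
        _ ≤ B * (a * b) := Nat.mul_le_mul_right _ h2
        _ = B * a * b := by ring
    rw [hx, Nat.add_mul_mod_self_left, Nat.mod_eq_of_lt hlt]
  -- σ is injective on range B
  have hinj : Set.InjOn σ (Finset.range B) := by
    intro x hx y hy hxy
    simp only [Finset.coe_range, Set.mem_Iio] at hx hy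
    have h1 : (x + 1) * (A * n) + q ≡ (y + 1) * (A * n) + q [MOD B] := by
      simpa [hσ, Nat.ModEq, mul_assoc] using hxy
    have h2 : (x + 1) * (A * n) ≡ (y + 1) * (A * n) [MOD B] :=
      h1.add_right_cancel' q
    have hcop : Nat.gcd B (A * n) = 1 := by
      rw [Nat.gcd_comm, mul_comm]; exact h
    have h3 : x + 1 ≡ y + 1 [MOD B] := h2.cancel_right_of_coprime hcop
    have h4 : x ≡ y [MOD B] := h3.add_right_cancel' 1
    have h5 := h4
    unfold Nat.ModEq at h5
    rw [Nat.mod_eq_of_lt hx, Nat.mod_eq_of_lt hy] at h5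
    exact h5
  have himg : Finset.image σ (Finset.range B) = Finset.range B := by
    apply Finset.eq_of_subset_of_card_le
    · intro x hx
      simp only [Finset.mem_image, Finset.mem_range] at hx ⊢
      obtain ⟨j, _, rfl⟩ := hx
      exact Nat.mod_lt _ hB
    · rw [Finset.card_image_of_injOn hinj]
  have hperm : (Multiset.range B).map σ = Multiset.range B := by
    have h6 := congrArg Finset.val himg
    rwa [Finset.image_val_of_injOn hinj] at h6
  -- Icc 1 B as a mapped range
  have hIcc : ∀ m : ℕ, (Finset.Icc 1 m).val = (Multiset.range m).map (fun j => j + 1) := by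
    intro m
    induction m with
    | zero => simp
    | succ k ih =>
      have hsub : Finset.Icc 1 (k + 1) = insert (k + 1) (Finset.Icc 1 k) := by
        ext x
        simp only [Finset.mem_Icc, Finset.mem_insert]
        omega
      have hnot : k + 1 ∉ Finset.Icc 1 k := by simp
      rw [hsub, Finset.insert_val_of_notMem hnot, ih, Multiset.range_succ,
        Multiset.map_cons]
  -- chain everything
  rw [hIcc B]
  conv_rhs => rw [← hperm]
  have hcoe : ∀ (X : Multiset ℕ) (f : ℤ → ℤ),
      Multiset.map f (do let a ← X; pure ((a : ℤ))) = Multiset.map (fun x : ℕ => f x) X := by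
    intro X f
    simp [Multiset.bind_singleton, Multiset.map_map]
  simp only [hcoe, Multiset.map_map]
  apply Multiset.map_congr rfl
  intro j hj
  simp only [Function.comp_apply]
  have hkey := congrArg (fun x : ℕ => (x : ℤ)) (key j)
  have hskey := congrArg (fun x : ℕ => (x : ℤ)) hs
  push_cast [Int.natCast_mod] at hkey hskey ⊢
  ring_nf at hkey hskey ⊢
  rw [hkey, hskey]
end
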